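/- In the setting described in the context, write φ_A : Cok(u,A) → Cok(u,B) and φ_B : Cok(u,B) → Cok(u,C) for the induced maps, and ψ_Z : Cok(Z,g) → Cok(Y,g) and ψ_Y : Cok(Y,g) → Cok(X,g) for the induced maps. Then range φ_A ⊆ ker φ_B and range ψ_Z ⊆ ker ψ_Y, and there is a k-linear isomorphism ker(φ_B)/range(φ_A) ≅ ker(ψ_Y)/range(ψ_Z). -/
import Mathlib


set_option maxHeartbeats 2000000 in
theorem homology_iso_of_hom_cokernels {k Λ : Type*} [CommRing k] [Ring Λ] [Algebra k Λ]
    {X Y Z A B C : Type*}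
    [AddCommGroup X] [AddCommGroup Y] [AddCommGroup Z]
    [AddCommGroup A] [AddCommGroup B] [AddCommGroup C]
    [Module Λ X] [Module Λ Y] [Module Λ Z]
    [Module Λ A] [Module Λ B] [Module Λ C]
    [Module k A] [Module k B] [Module k C]
    [IsScalarTower k Λ A] [IsScalarTower k Λ B] [IsScalarTower k Λ C]
    [SMulCommClass Λ k A] [SMulCommClass Λ k B] [SMulCommClass Λ k C]
    -- the short right exact sequence X → Y → Z → 0
    (u : X →ₗ[Λ] Y) (v : Y →ₗ[Λ] Z)
    (hv : Function.Surjective v) (huv : LinearMap.ker v = LinearMap.range u)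
    -- the short left exact sequence 0 → A → B → C
    (f : A →ₗ[Λ] B) (g : B →ₗ[Λ] C)
    (hf : Function.Injective f) (hfg : LinearMap.ker g = LinearMap.range f)
    -- precomposition with u, defining Cok(u,A), Cok(u,B) and Cok(u,C)
    (PuA : (Y →ₗ[Λ] A) →ₗ[k] (X →ₗ[Λ] A)) (hPuA : ∀ φ, PuA φ = φ ∘ₗ u)
    (PuB : (Y →ₗ[Λ] B) →ₗ[k] (X →ₗ[Λ] B)) (hPuB : ∀ φ, PuB φ = φ ∘ₗ u)
    (PuC : (Y →ₗ[Λ] C) →ₗ[k] (X →ₗ[Λ] C)) (hPuC : ∀ φ, PuC φ = φ ∘ₗ u)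
    -- postcomposition with g, defining Cok(Z,g), Cok(Y,g) and Cok(X,g)
    (PgZ : (Z →ₗ[Λ] B) →ₗ[k] (Z →ₗ[Λ] C)) (hPgZ : ∀ φ, PgZ φ = g ∘ₗ φ)
    (PgY : (Y →ₗ[Λ] B) →ₗ[k] (Y →ₗ[Λ] C)) (hPgY : ∀ φ, PgY φ = g ∘ₗ φ)
    (PgX : (X →ₗ[Λ] B) →ₗ[k] (X →ₗ[Λ] C)) (hPgX : ∀ φ, PgX φ = g ∘ₗ φ)
    -- the induced map φ_A : Cok(u,A) → Cok(u,B), postcomposition with f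
    (φA : ((X →ₗ[Λ] A) ⧸ LinearMap.range PuA) →ₗ[k] ((X →ₗ[Λ] B) ⧸ LinearMap.range PuB))
    (hφA : ∀ ψ : X →ₗ[Λ] A,
      φA (Submodule.Quotient.mk ψ) = Submodule.Quotient.mk (f ∘ₗ ψ))
    -- the induced map φ_B : Cok(u,B) → Cok(u,C), postcomposition with g
    (φB : ((X →ₗ[Λ] B) ⧸ LinearMap.range PuB) →ₗ[k] ((X →ₗ[Λ] C) ⧸ LinearMap.range PuC))
    (hφB : ∀ ψ : X →ₗ[Λ] B,
      φB (Submodule.Quotient.mk ψ) = Submodule.Quotient.mk (g ∘ₗ ψ))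
    -- the induced map ψ_Z : Cok(Z,g) → Cok(Y,g), precomposition with v
    (ψZ : ((Z →ₗ[Λ] C) ⧸ LinearMap.range PgZ) →ₗ[k] ((Y →ₗ[Λ] C) ⧸ LinearMap.range PgY))
    (hψZ : ∀ φ : Z →ₗ[Λ] C,
      ψZ (Submodule.Quotient.mk φ) = Submodule.Quotient.mk (φ ∘ₗ v))
    -- the induced map ψ_Y : Cok(Y,g) → Cok(X,g), precomposition with u
    (ψY : ((Y →ₗ[Λ] C) ⧸ LinearMap.range PgY) →ₗ[k] ((X →ₗ[Λ] C) ⧸ LinearMap.range PgX))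
    (hψY : ∀ φ : Y →ₗ[Λ] C,
      ψY (Submodule.Quotient.mk φ) = Submodule.Quotient.mk (φ ∘ₗ u)) :
    LinearMap.range φA ≤ LinearMap.ker φB ∧
    LinearMap.range ψZ ≤ LinearMap.ker ψY ∧
    Nonempty ((↥(LinearMap.ker φB) ⧸
        Submodule.comap (LinearMap.ker φB).subtype (LinearMap.range φA)) ≃ₗ[k]
      (↥(LinearMap.ker ψY) ⧸
        Submodule.comap (LinearMap.ker ψY).subtype (LinearMap.range ψZ))) := by
  classical
  have hgf : ∀ a : A, g (f a) = 0 := fun a => by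
    have : f a ∈ LinearMap.ker g := hfg ▸ LinearMap.mem_range_self f a
    exact this
  have hvu : ∀ x : X, v (u x) = 0 := fun x => by
    have : u x ∈ LinearMap.ker v := huv ▸ LinearMap.mem_range_self u x
    exact this
  have h1 : LinearMap.range φA ≤ LinearMap.ker φB := by
    rintro x ⟨y, rfl⟩
    obtain ⟨ψ, rfl⟩ := Submodule.Quotient.mk_surjective _ y
    rw [LinearMap.mem_ker, hφA, hφB]
    have : g ∘ₗ (f ∘ₗ ψ) = 0 := by ext x; simp [hgf]
    rw [this]
    simp
  have h2 : LinearMap.range ψZ ≤ LinearMap.ker ψY := by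
    rintro x ⟨y, rfl⟩
    obtain ⟨φ, rfl⟩ := Submodule.Quotient.mk_surjective _ y
    rw [LinearMap.mem_ker, hψZ, hψY]
    have : (φ ∘ₗ v) ∘ₗ u = 0 := by ext x; simp [hvu]
    rw [this]
    simp
  -- factorization through v
  have factor : ∀ h : Y →ₗ[Λ] C, h ∘ₗ u = 0 → ∃ τ : Z →ₗ[Λ] C, τ ∘ₗ v = h := by
    intro h h0
    have hle : LinearMap.ker v ≤ LinearMap.ker h := by
      rw [huv]; rintro y ⟨x, rfl⟩
      simpa using LinearMap.congr_fun h0 x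
    let w : (Y ⧸ LinearMap.ker v) →ₗ[Λ] Z := (LinearMap.ker v).liftQ v le_rfl
    have hw : Function.Bijective w := by
      constructor
      · rw [← LinearMap.ker_eq_bot]
        exact Submodule.ker_liftQ_eq_bot _ _ _ le_rfl
      · intro z; obtain ⟨y, rfl⟩ := hv z; exact ⟨Submodule.Quotient.mk y, rfl⟩
    let e := LinearEquiv.ofBijective w hw
    refine ⟨(LinearMap.ker v).liftQ h hle ∘ₗ (e.symm : Z →ₗ[Λ] _), ?_⟩
    ext y
    have hsy : e.symm (v y) = Submodule.Quotient.mk y := by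
      rw [LinearEquiv.symm_apply_eq]
      rfl
    show (LinearMap.ker v).liftQ h hle (e.symm (v y)) = h y
    rw [hsy, Submodule.liftQ_apply]
  -- factorization through f
  have factf : ∀ h : X →ₗ[Λ] B, g ∘ₗ h = 0 → ∃ α : X →ₗ[Λ] A, f ∘ₗ α = h := by
    intro h h0
    have hmem : ∀ x, h x ∈ LinearMap.range f := fun x => by
      rw [← hfg]; exact LinearMap.congr_fun h0 x
    let fr : A →ₗ[Λ] LinearMap.range f := f.rangeRestrict
    have hfr : Function.Bijective fr :=
      ⟨fun a b hab => hf (congrArg Subtype.val hab), f.surjective_rangeRestrict⟩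
    let e := LinearEquiv.ofBijective fr hfr
    refine ⟨(e.symm : _ →ₗ[Λ] A) ∘ₗ h.codRestrict _ hmem, ?_⟩
    ext x
    have h3 : fr (e.symm ⟨h x, hmem x⟩) = ⟨h x, hmem x⟩ := e.apply_symm_apply _
    have hfx : f (e.symm ⟨h x, hmem x⟩) = h x := congrArg Subtype.val h3
    simpa [LinearMap.codRestrict] using hfx
  -- the pair module S
  let D : ((X →ₗ[Λ] B) × (Y →ₗ[Λ] C)) →ₗ[k] (X →ₗ[Λ] C) :=
    { toFun := fun p => g ∘ₗ p.1 - p.2 ∘ₗ u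
      map_add' := by intro p q; ext x; simp; abel
      map_smul' := by
        intro c p; ext x
        simp [LinearMap.map_smul_of_tower, smul_sub] }
  set S : Submodule k ((X →ₗ[Λ] B) × (Y →ₗ[Λ] C)) := LinearMap.ker D with hS
  have hSmem : ∀ p : (X →ₗ[Λ] B) × (Y →ₗ[Λ] C), p ∈ S ↔ g ∘ₗ p.1 = p.2 ∘ₗ u := by
    intro p
    rw [hS, LinearMap.mem_ker]
    constructor
    · intro hp; have := sub_eq_zero.mp hp; exact this
    · intro hp; show g ∘ₗ p.1 - p.2 ∘ₗ u = 0; rw [sub_eq_zero]; exact hp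
  have hk1 : ∀ p : (X →ₗ[Λ] B) × (Y →ₗ[Λ] C), p ∈ S →
      (Submodule.Quotient.mk p.1 : _ ⧸ LinearMap.range PuB) ∈ LinearMap.ker φB := by
    intro p hp
    have hD : g ∘ₗ p.1 = p.2 ∘ₗ u := (hSmem p).mp hp
    rw [LinearMap.mem_ker, hφB, hD, Submodule.Quotient.mk_eq_zero]
    exact ⟨p.2, hPuC p.2⟩
  have hk2 : ∀ p : (X →ₗ[Λ] B) × (Y →ₗ[Λ] C), p ∈ S →
      (Submodule.Quotient.mk p.2 : _ ⧸ LinearMap.range PgY) ∈ LinearMap.ker ψY := by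
    intro p hp
    have hD : g ∘ₗ p.1 = p.2 ∘ₗ u := (hSmem p).mp hp
    rw [LinearMap.mem_ker, hψY, ← hD, Submodule.Quotient.mk_eq_zero]
    exact ⟨p.1, hPgX p.1⟩
  let q1 : S →ₗ[k] LinearMap.ker φB :=
    { toFun := fun s => ⟨Submodule.Quotient.mk s.1.1, hk1 s.1 s.2⟩
      map_add' := by intro s t; apply Subtype.ext; simp
      map_smul' := by intro c s; apply Subtype.ext; simp }
  let q2 : S →ₗ[k] LinearMap.ker ψY :=
    { toFun := fun s => ⟨Submodule.Quotient.mk s.1.2, hk2 s.1 s.2⟩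
      map_add' := by intro s t; apply Subtype.ext; simp
      map_smul' := by intro c s; apply Subtype.ext; simp }
  let P1 : S →ₗ[k] (↥(LinearMap.ker φB) ⧸
      Submodule.comap (LinearMap.ker φB).subtype (LinearMap.range φA)) :=
    (Submodule.comap (LinearMap.ker φB).subtype (LinearMap.range φA)).mkQ ∘ₗ q1
  let P2 : S →ₗ[k] (↥(LinearMap.ker ψY) ⧸
      Submodule.comap (LinearMap.ker ψY).subtype (LinearMap.range ψZ)) :=
    (Submodule.comap (LinearMap.ker ψY).subtype (LinearMap.range ψZ)).mkQ ∘ₗ q2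
  have hs1 : Function.Surjective P1 := by
    intro x
    obtain ⟨y, rfl⟩ := Submodule.mkQ_surjective _ x
    obtain ⟨ψ, hψ⟩ := Submodule.Quotient.mk_surjective _ y.1
    have hy : φB (Submodule.Quotient.mk ψ) = 0 := by rw [hψ]; exact y.2
    rw [hφB, Submodule.Quotient.mk_eq_zero] at hy
    obtain ⟨θ, hθ⟩ := hy
    rw [hPuC] at hθ
    refine ⟨⟨(ψ, θ), (hSmem (ψ, θ)).mpr hθ.symm⟩, ?_⟩
    show Submodule.mkQ _ (q1 _) = Submodule.mkQ _ y
    congr 1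
    exact Subtype.ext hψ
  have hs2 : Function.Surjective P2 := by
    intro x
    obtain ⟨y, rfl⟩ := Submodule.mkQ_surjective _ x
    obtain ⟨θ, hθ⟩ := Submodule.Quotient.mk_surjective _ y.1
    have hy : ψY (Submodule.Quotient.mk θ) = 0 := by rw [hθ]; exact y.2
    rw [hψY, Submodule.Quotient.mk_eq_zero] at hy
    obtain ⟨ψ, hψ⟩ := hy
    rw [hPgX] at hψ
    refine ⟨⟨(ψ, θ), (hSmem (ψ, θ)).mpr hψ⟩, ?_⟩
    show Submodule.mkQ _ (q2 _) = Submodule.mkQ _ y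
    congr 1
    exact Subtype.ext hθ
  have memP1 : ∀ s : S, s ∈ LinearMap.ker P1 ↔
      (Submodule.Quotient.mk s.1.1 : _ ⧸ LinearMap.range PuB) ∈ LinearMap.range φA := by
    intro s
    rw [LinearMap.mem_ker]
    show Submodule.mkQ _ (q1 s) = 0 ↔ _
    rw [Submodule.mkQ_apply, Submodule.Quotient.mk_eq_zero, Submodule.mem_comap]
    rfl
  have memP2 : ∀ s : S, s ∈ LinearMap.ker P2 ↔
      (Submodule.Quotient.mk s.1.2 : _ ⧸ LinearMap.range PgY) ∈ LinearMap.range ψZ := by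
    intro s
    rw [LinearMap.mem_ker]
    show Submodule.mkQ _ (q2 s) = 0 ↔ _
    rw [Submodule.mkQ_apply, Submodule.Quotient.mk_eq_zero, Submodule.mem_comap]
    rfl
  have hker : LinearMap.ker P1 = LinearMap.ker P2 := by
    ext s
    rw [memP1, memP2]
    have hD : g ∘ₗ s.1.1 = s.1.2 ∘ₗ u := (hSmem s.1).mp s.2
    constructor
    · rintro ⟨a, ha⟩
      obtain ⟨α, rfl⟩ := Submodule.Quotient.mk_surjective _ a
      rw [hφA] at ha
      have hsub : s.1.1 - f ∘ₗ α ∈ LinearMap.range PuB := by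
        rw [← Submodule.Quotient.mk_eq_zero, Submodule.Quotient.mk_sub, ha, sub_self]
      obtain ⟨ρ, hρ⟩ := hsub
      rw [hPuB] at hρ
      have h0 : (s.1.2 - g ∘ₗ ρ) ∘ₗ u = 0 := by
        ext x
        have e1 : s.1.2 (u x) = g (s.1.1 x) := (LinearMap.congr_fun hD x).symm
        have e2 : ρ (u x) = s.1.1 x - f (α x) := LinearMap.congr_fun hρ x
        simp [e1, e2, hgf]
      obtain ⟨τ, hτ⟩ := factor _ h0
      refine ⟨Submodule.Quotient.mk τ, ?_⟩
      rw [hψZ, hτ, Submodule.Quotient.mk_sub, sub_eq_self, Submodule.Quotient.mk_eq_zero]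
      exact ⟨ρ, hPgY ρ⟩
    · rintro ⟨a, ha⟩
      obtain ⟨τ, rfl⟩ := Submodule.Quotient.mk_surjective _ a
      rw [hψZ] at ha
      have hsub : s.1.2 - τ ∘ₗ v ∈ LinearMap.range PgY := by
        rw [← Submodule.Quotient.mk_eq_zero, Submodule.Quotient.mk_sub, ha, sub_self]
      obtain ⟨ρ, hρ⟩ := hsub
      rw [hPgY] at hρ
      have h0 : g ∘ₗ (s.1.1 - ρ ∘ₗ u) = 0 := by
        ext x
        have e1 : g (s.1.1 x) = s.1.2 (u x) := LinearMap.congr_fun hD x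
        have e2 : g (ρ (u x)) = s.1.2 (u x) - τ (v (u x)) := LinearMap.congr_fun hρ (u x)
        simp [e1, e2, hvu]
      obtain ⟨α, hα⟩ := factf _ h0
      refine ⟨Submodule.Quotient.mk α, ?_⟩
      rw [hφA, hα, Submodule.Quotient.mk_sub, sub_eq_self, Submodule.Quotient.mk_eq_zero]
      exact ⟨ρ, hPuB ρ⟩
  refine ⟨h1, h2, ⟨?_⟩⟩
  exact (P1.quotKerEquivOfSurjective hs1).symm.trans
    ((Submodule.quotEquivOfEq _ _ hker).trans (P2.quotKerEquivOfSurjective hs2))
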